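/- Let (M,g) be a compact Riemannian manifold, H a smooth embedded hypersurface with Fermi normal coordinate x_n (signed distance to H), p(x,ξ) = |ξ|²_g, and μ an invariant probability measure of the geodesic flow. For k ≥ 0 let G^k = {ρ ∈ S*_H M : (H_p^k x_n)(ρ) ≠ 0 and (H_p^j x_n)(ρ) = 0 for all j < k}, where H_p is the Hamilton vector field of p. Then μ(⋃_{k=0}^∞ G^k) = 0; in particular, μ restricted to S*_H M is supported on points where the geodesic is tangent to H to infinite order. -/
import Mathlib


open MeasureTheory Set Filter Topology

/-- If the `k`-th derivative along the flow is positive at `ρ` and all lower-order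
ones vanish, then `D 0` is positive along the forward orbit for a short time. -/
lemma taylor_pos {X : Type*} [MetricSpace X] (φ : Flow ℝ X)
    (D : ℕ → X → ℝ) (hDcont : ∀ k, Continuous (D k))
    (hDderiv : ∀ (k : ℕ) (ρ : X) (t : ℝ),
      HasDerivAt (fun s : ℝ => D k (φ.toFun s ρ)) (D (k + 1) (φ.toFun t ρ)) t)
    (ρ : X) (k : ℕ) (hk : 0 < D k ρ) (hj : ∀ j < k, D j ρ = 0) :
    ∃ ε > 0, ∀ t ∈ Set.Ioc (0:ℝ) ε, 0 < D 0 (φ.toFun t ρ) := by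
  -- continuity gives a neighborhood where D k stays positive
  have hcont : ∀ j : ℕ, Continuous (fun s : ℝ => D j (φ.toFun s ρ)) := fun j =>
    (hDcont j).comp (φ.continuous continuous_id continuous_const)
  have h0 : D k (φ.toFun 0 ρ) = D k ρ := by rw [φ.map_zero_apply]
  have hmem : ∀ᶠ t in 𝓝 (0:ℝ), 0 < D k (φ.toFun t ρ) := by
    have := (hcont k).continuousAt (x := (0:ℝ))
    have h := this.preimage_mem_nhds (Ioi_mem_nhds (by rw [h0]; exact hk))
    exact h
  rw [Metric.eventually_nhds_iff] at hmem
  obtain ⟨δ, hδ, hball⟩ := hmem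
  refine ⟨δ/2, by linarith, ?_⟩
  have hbase : ∀ t ∈ Set.Icc (0:ℝ) (δ/2), 0 < D k (φ.toFun t ρ) := by
    intro t ht
    apply hball
    rw [Real.dist_eq, sub_zero, abs_of_nonneg ht.1]
    linarith [ht.2]
  -- downward induction
  have main : ∀ i, i ≤ k → ∀ t ∈ Set.Ioc (0:ℝ) (δ/2), 0 < D (k - i) (φ.toFun t ρ) := by
    intro i
    induction i with
    | zero =>
      intro _ t ht
      exact hbase t ⟨ht.1.le, ht.2⟩
    | succ i ih =>
      intro hik t ht
      have hik' : i ≤ k := Nat.le_of_succ_le hik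
      have hprev := ih hik'
      have hj1 : k - (i + 1) + 1 = k - i := by omega
      have hjk : k - (i + 1) < k := by omega
      have hmono : StrictMonoOn (fun s => D (k - (i+1)) (φ.toFun s ρ)) (Set.Icc 0 (δ/2)) := by
        apply strictMonoOn_of_deriv_pos (convex_Icc 0 (δ/2))
        · exact (hcont _).continuousOn
        · intro x hx
          rw [interior_Icc] at hx
          rw [(hDderiv (k - (i+1)) ρ x).deriv, hj1]
          exact hprev x ⟨hx.1, hx.2.le⟩
      have := hmono (Set.left_mem_Icc.2 (by linarith)) ⟨ht.1.le, ht.2⟩ ht.1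
      simpa [φ.map_zero_apply, hj _ hjk] using this
  intro t ht
  have := main k le_rfl t ht
  simpa using this

/-- Points in `G^k` leave `{D 0 = 0}` immediately. -/
lemma leaves_immediately {X : Type*} [MetricSpace X] (φ : Flow ℝ X)
    (D : ℕ → X → ℝ) (hDcont : ∀ k, Continuous (D k))
    (hDderiv : ∀ (k : ℕ) (ρ : X) (t : ℝ),
      HasDerivAt (fun s : ℝ => D k (φ.toFun s ρ)) (D (k + 1) (φ.toFun t ρ)) t)
    (ρ : X) (k : ℕ) (hk : D k ρ ≠ 0) (hj : ∀ j < k, D j ρ = 0) :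
    ∃ ε > 0, ∀ t ∈ Set.Ioc (0:ℝ) ε, D 0 (φ.toFun t ρ) ≠ 0 := by
  rcases hk.lt_or_gt with hneg | hpos
  · -- apply taylor_pos to -D
    obtain ⟨ε, hε, h⟩ := taylor_pos φ (fun j x => -(D j x))
      (fun j => (hDcont j).neg)
      (fun j ρ' t => ((hDderiv j ρ' t).neg))
      ρ k (by simpa using hneg) (fun j hjk => by simp [hj j hjk])
    exact ⟨ε, hε, fun t ht => by have := h t ht; intro hz; rw [hz] at this; simp at this⟩
  · obtain ⟨ε, hε, h⟩ := taylor_pos φ D hDcont hDderiv ρ k hpos hj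
    exact ⟨ε, hε, fun t ht => (h t ht).ne'⟩

/-- The set of points on the section with no return before time `c` is measurable. -/
lemma section_measurable {X : Type*} [MetricSpace X] [CompactSpace X]
    [MeasurableSpace X] [BorelSpace X] (φ : Flow ℝ X)
    (f : X → ℝ) (hf : Continuous f) (c : ℝ) (hc : 0 < c) :
    MeasurableSet {ρ : X | f ρ = 0 ∧ ∀ t ∈ Set.Ioc (0:ℝ) c, f (φ.toFun t ρ) ≠ 0} := by
  have hcov : ∀ ρ : X, (∀ t ∈ Set.Ioc (0:ℝ) c, f (φ.toFun t ρ) ≠ 0) ↔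
      ∀ m : ℕ, ∀ t ∈ Set.Icc (c / (m + 2)) c, f (φ.toFun t ρ) ≠ 0 := by
    intro ρ
    constructor
    · intro h m t ht
      refine h t ⟨lt_of_lt_of_le (by positivity) ht.1, ht.2⟩
    · intro h t ht
      obtain ⟨m, hm⟩ := exists_nat_one_div_lt (div_pos ht.1 hc : 0 < t / c)
      refine h m t ⟨?_, ht.2⟩
      have h2 : c / (m + 2) ≤ c / (m + 1) := by
        apply div_le_div_of_nonneg_left hc.le (by positivity) (by linarith)
      have h3 : c / (m + 1) < t := by
        calc c / (m+1) = c * (1 / (m+1)) := by ring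
          _ < c * (t / c) := mul_lt_mul_of_pos_left hm hc
          _ = t := by field_simp
      linarith
  have hrw : {ρ : X | f ρ = 0 ∧ ∀ t ∈ Set.Ioc (0:ℝ) c, f (φ.toFun t ρ) ≠ 0} =
      {ρ : X | f ρ = 0} ∩ ⋂ m : ℕ,
        {ρ : X | ∀ t ∈ Set.Icc (c / (m + 2)) c, f (φ.toFun t ρ) ≠ 0} := by
    ext ρ
    simp only [Set.mem_setOf_eq, Set.mem_inter_iff, Set.mem_iInter]
    exact and_congr_right fun _ => hcov ρ
  rw [hrw]
  apply MeasurableSet.inter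
  · exact (isClosed_eq hf continuous_const).measurableSet
  refine MeasurableSet.iInter fun m => ?_
  -- the complement is the projection of a compact set
  have hCclosed : IsClosed {p : ℝ × X | p.1 ∈ Set.Icc (c/(m+2)) c ∧ f (φ.toFun p.1 p.2) = 0} := by
    apply IsClosed.inter
    · exact isClosed_Icc.preimage continuous_fst
    · exact isClosed_eq (hf.comp (φ.continuous continuous_fst continuous_snd)) continuous_const
  have hCcomp : IsCompact {p : ℝ × X | p.1 ∈ Set.Icc (c/(m+2)) c ∧ f (φ.toFun p.1 p.2) = 0} := by
    apply IsCompact.of_isClosed_subset (isCompact_Icc.prod isCompact_univ) hCclosed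
    intro p hp
    exact ⟨hp.1, Set.mem_univ _⟩
  have himg : {ρ : X | ∀ t ∈ Set.Icc (c / (m + 2)) c, f (φ.toFun t ρ) ≠ 0} =
      (Prod.snd '' {p : ℝ × X | p.1 ∈ Set.Icc (c/(m+2)) c ∧ f (φ.toFun p.1 p.2) = 0})ᶜ := by
    ext ρ
    simp only [Set.mem_setOf_eq, Set.mem_compl_iff, Set.mem_image, Prod.exists, not_exists]
    constructor
    · intro h
      rintro t x ⟨⟨ht, hz⟩, rfl⟩
      exact h t ht hz
    · intro h t ht hz
      exact h t ρ ⟨⟨ht, hz⟩, rfl⟩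
  rw [himg]
  exact ((hCcomp.image continuous_snd).isClosed.measurableSet).compl

/-- The set of points on the section with no return before time `c` has measure zero
for any invariant probability measure. -/
lemma section_null {X : Type*} [MetricSpace X] [CompactSpace X]
    [MeasurableSpace X] [BorelSpace X] (φ : Flow ℝ X)
    (μ : Measure X) [IsProbabilityMeasure μ]
    (hinv : ∀ t : ℝ, μ.map (φ.toFun t) = μ)
    (f : X → ℝ) (hf : Continuous f) (c : ℝ) (hc : 0 < c) :
    μ {ρ : X | f ρ = 0 ∧ ∀ t ∈ Set.Ioc (0:ℝ) c, f (φ.toFun t ρ) ≠ 0} = 0 := by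
  set S := {ρ : X | f ρ = 0 ∧ ∀ t ∈ Set.Ioc (0:ℝ) c, f (φ.toFun t ρ) ≠ 0} with hS
  have hSm : MeasurableSet S := section_measurable φ f hf c hc
  set s : ℕ → ℝ := fun i => c / (i + 2) with hs
  have hs_mem : ∀ i : ℕ, s i ∈ Set.Ioo (0:ℝ) c := by
    intro i
    constructor
    · positivity
    · rw [div_lt_iff₀ (by positivity)]
      nlinarith [hc]
  have hs_anti : ∀ i j : ℕ, i < j → s j < s i := by
    intro i j hij
    have hij' : (i:ℝ) < j := by exact_mod_cast hij
    simp only [hs]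
    gcongr

  -- pairwise disjoint preimages
  have hdisj : Pairwise (Function.onFun Disjoint (fun i => φ.toFun (s i) ⁻¹' S)) := by
    have key : ∀ i j : ℕ, s j < s i → (φ.toFun (s i) ⁻¹' S) ∩ (φ.toFun (s j) ⁻¹' S) = ∅ := by
      intro i j hlt
      ext ρ
      simp only [Set.mem_inter_iff, Set.mem_preimage, Set.mem_empty_iff_false, iff_false]
      rintro ⟨hi, hj⟩
      have hd : s i - s j ∈ Set.Ioc (0:ℝ) c := by
        constructor
        · linarith
        · have := (hs_mem i).2
          have := (hs_mem j).1
          linarith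
      have hne := hj.2 (s i - s j) hd
      have : φ.toFun (s i - s j) (φ.toFun (s j) ρ) = φ.toFun (s i) ρ := by
        rw [← φ.map_add]
        norm_num
      rw [this] at hne
      exact hne hi.1
    intro i j hij
    rcases hij.lt_or_gt with h | h
    · exact Set.disjoint_iff_inter_eq_empty.2 (key i j (hs_anti i j h))
    · exact (Set.disjoint_iff_inter_eq_empty.2 (key j i (hs_anti j i h))).symm
  have hφm : ∀ t : ℝ, Measurable (φ.toFun t) := fun t =>
    (φ.cont'.comp (Continuous.prodMk_right t)).measurable
  have hmeas : ∀ i : ℕ, MeasurableSet (φ.toFun (s i) ⁻¹' S) := fun i =>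
    hSm.preimage (hφm (s i))
  have heq : ∀ i : ℕ, μ (φ.toFun (s i) ⁻¹' S) = μ S := by
    intro i
    rw [← Measure.map_apply (hφm (s i)) hSm, hinv]
  by_contra hne
  have hsum : μ (⋃ i, φ.toFun (s i) ⁻¹' S) = ∑' i : ℕ, μ (φ.toFun (s i) ⁻¹' S) :=
    measure_iUnion hdisj hmeas
  have htop : (∑' _ : ℕ, μ S) = ⊤ := ENNReal.tsum_const_eq_top_of_ne_zero hne
  have hle : μ (⋃ i, φ.toFun (s i) ⁻¹' S) ≤ 1 := by
    rw [← measure_univ (μ := μ)]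
    exact measure_mono (Set.subset_univ _)
  rw [hsum] at hle
  simp only [heq] at hle
  rw [htop] at hle
  exact absurd hle (by simp)

/-- Abstract model of the geodesic flow on `X = S*M` near a hypersurface `H`,
with Fermi normal coordinate `xn` (so `S*_H M = {xn = 0}`).  `D k` denotes the `k`-th
iterated derivative `H_p^k xn` of `xn` along the flow, encoded by `D 0 = xn` and
`d/dt (D k)(φ_t ρ) = (D (k+1))(φ_t ρ)`.  With
`G^k = {ρ ∈ S*_H M : (H_p^k xn)(ρ) ≠ 0, (H_p^j xn)(ρ) = 0 for j < k}`,
any flow-invariant Borel probability measure `μ` satisfies `μ(⋃ k, G^k) = 0`;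
in particular `μ|_{S*_H M}` is supported on points of infinite-order tangency. -/
theorem stmt_4 {X : Type*} [MetricSpace X] [CompactSpace X]
    [MeasurableSpace X] [BorelSpace X]
    (φ : Flow ℝ X) (μ : Measure X) [IsProbabilityMeasure μ]
    (hinv : ∀ t : ℝ, μ.map (φ.toFun t) = μ)
    (xn : X → ℝ) (hxn : Continuous xn)
    (D : ℕ → X → ℝ) (hD0 : D 0 = xn) (hDcont : ∀ k, Continuous (D k))
    (hDderiv : ∀ (k : ℕ) (ρ : X) (t : ℝ),
      HasDerivAt (fun s : ℝ => D k (φ.toFun s ρ)) (D (k + 1) (φ.toFun t ρ)) t) :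
    μ (⋃ k : ℕ, {ρ : X | xn ρ = 0 ∧ D k ρ ≠ 0 ∧ ∀ j < k, D j ρ = 0}) = 0 := by
  subst hD0
  -- covering by the "no quick return" sets
  have hsub : (⋃ k : ℕ, {ρ : X | D 0 ρ = 0 ∧ D k ρ ≠ 0 ∧ ∀ j < k, D j ρ = 0}) ⊆
      ⋃ n : ℕ, {ρ : X | D 0 ρ = 0 ∧
        ∀ t ∈ Set.Ioc (0:ℝ) (1/(n+1)), D 0 (φ.toFun t ρ) ≠ 0} := by
    intro ρ hρ
    simp only [Set.mem_iUnion, Set.mem_setOf_eq] at hρ ⊢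
    obtain ⟨k, h0, hk, hj⟩ := hρ
    obtain ⟨ε, hε, hleave⟩ := leaves_immediately φ D hDcont hDderiv ρ k hk hj
    obtain ⟨n, hn⟩ := exists_nat_one_div_lt hε
    refine ⟨n, h0, fun t ht => hleave t ⟨ht.1, ht.2.trans hn.le⟩⟩
  refine measure_mono_null hsub (measure_iUnion_null fun n => ?_)
  exact section_null φ μ hinv (D 0) (hDcont 0) (1/(n+1)) (by positivity)
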